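/- For each n, let c^{(n)} be the sequence with c^{(n)}_k = 0 for k < n and c^{(n)}_k = (1/r)(−s/r)^{k−n} f_{k+1}²/(f_n f_{n+1}) for k ≥ n. Then F̂(r,s)(c^{(n)}) = e^{(n)} (the n-th standard unit sequence), and the family (c^{(n)})_{n≥0} is a Schauder basis of ℓ_p(F̂(r,s)) for 1 ≤ p < ∞: every x ∈ ℓ_p(F̂(r,s)) has the unique norm-convergent representation x = ∑_n (F̂(r,s)x)_n c^{(n)}. -/

import Mathlib

open scoped BigOperators
open Filter

noncomputable def fibs (n : ℕ) : ℝ := (Nat.fib (n + 1) : ℝ)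

noncomputable def Fhat (r s : ℝ) (x : ℕ → ℝ) : ℕ → ℝ
  | 0 => r * x 0
  | n + 1 => r * (fibs (n + 1) / fibs (n + 2)) * x (n + 1)
      + s * (fibs (n + 2) / fibs (n + 1)) * x n

noncomputable def cseq (r s : ℝ) (n : ℕ) : ℕ → ℝ := fun k =>
  if k < n then 0 else (1 / r) * (-s / r) ^ (k - n) * (fibs (k + 1) ^ 2 / (fibs n * fibs (n + 1)))

lemma fibs_pos (n : ℕ) : 0 < fibs n := by
  unfold fibs; exact_mod_cast Nat.fib_pos.mpr (Nat.succ_pos n)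

lemma fibs_ne (n : ℕ) : fibs n ≠ 0 := (fibs_pos n).ne'

lemma Fhat_cseq (r s : ℝ) (hr : r ≠ 0) (n k : ℕ) :
    Fhat r s (cseq r s n) k = if k = n then 1 else 0 := by
  cases k with
  | zero =>
    cases n with
    | zero =>
      simp only [Fhat, cseq, Nat.sub_zero, pow_zero, if_neg (lt_irrefl 0)]
      show r * (1 / r * 1 * (fibs 1 ^ 2 / (fibs 0 * fibs 1))) = if (0:ℕ) = 0 then 1 else 0
      rw [if_pos rfl]
      field_simp [fibs_ne]
      norm_num [fibs, Nat.fib]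
    | succ n =>
      simp [Fhat, cseq, Nat.succ_pos]
  | succ k =>
    rcases lt_trichotomy (k+1) n with h | h | h
    · have hk : k < n := Nat.lt_of_succ_lt h
      simp [Fhat, cseq, h, hk, Nat.ne_of_lt h]
    · subst h
      have hk : k < k + 1 := Nat.lt_succ_self k
      simp only [Fhat, cseq, if_neg (lt_irrefl (k+1)), if_pos hk, Nat.sub_self, pow_zero,
        if_pos rfl, mul_zero, add_zero]
      field_simp [fibs_ne]
      ring_nf
      simp
    · have hn : n ≤ k := Nat.lt_succ_iff.mp h
      have h1 : ¬ (k + 1 < n) := by omega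
      have h2 : ¬ (k < n) := by omega
      have h3 : k + 1 - n = (k - n) + 1 := by omega
      rw [if_neg (by omega : ¬ (k + 1 = n))]
      simp only [Fhat, cseq, if_neg h1, if_neg h2, h3, pow_succ]
      field_simp [fibs_ne]
      ring

lemma Fhat_sub (r s : ℝ) (x y : ℕ → ℝ) (k : ℕ) :
    Fhat r s (fun i => x i - y i) k = Fhat r s x k - Fhat r s y k := by
  cases k <;> simp [Fhat] <;> ring

lemma Fhat_smul (r s c : ℝ) (x : ℕ → ℝ) (k : ℕ) :
    Fhat r s (fun i => c * x i) k = c * Fhat r s x k := by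
  cases k <;> simp [Fhat] <;> ring

lemma Fhat_sum (r s : ℝ) (t : Finset ℕ) (g : ℕ → ℕ → ℝ) (k : ℕ) :
    Fhat r s (fun i => ∑ n ∈ t, g n i) k = ∑ n ∈ t, Fhat r s (g n) k := by
  cases k with
  | zero => simp [Fhat, Finset.mul_sum]
  | succ k => simp [Fhat, Finset.mul_sum, Finset.sum_add_distrib]

lemma Fhat_key (r s : ℝ) (hr : r ≠ 0) (x μ : ℕ → ℝ) (m k : ℕ) :
    Fhat r s (fun i => x i - ∑ n ∈ Finset.range (m + 1), μ n * cseq r s n i) k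
      = Fhat r s x k - (if k ≤ m then μ k else 0) := by
  rw [Fhat_sub, Fhat_sum]
  congr 1
  have h : ∀ n ∈ Finset.range (m+1),
      Fhat r s (fun i => μ n * cseq r s n i) k = μ n * (if k = n then 1 else 0) := by
    intro n _
    rw [Fhat_smul, Fhat_cseq r s hr]
  rw [Finset.sum_congr rfl h]
  simp [mul_ite, Finset.sum_ite_eq, Nat.lt_succ_iff]

theorem schauder_basis (r s : ℝ) (hr : r ≠ 0) (hs : s ≠ 0) (p : ℝ) (hp : 1 ≤ p) :
    (∀ n, Fhat r s (cseq r s n) = fun k => if k = n then 1 else 0) ∧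
    ∀ x : ℕ → ℝ, Summable (fun k => |Fhat r s x k| ^ p) →
      Tendsto (fun m =>
          (∑' k, |Fhat r s (fun i => x i - ∑ n ∈ Finset.range (m + 1),
            Fhat r s x n * cseq r s n i) k| ^ p) ^ (1 / p)) atTop (nhds 0) ∧
      ∀ μ : ℕ → ℝ,
        Tendsto (fun m =>
            (∑' k, |Fhat r s (fun i => x i - ∑ n ∈ Finset.range (m + 1),
              μ n * cseq r s n i) k| ^ p) ^ (1 / p)) atTop (nhds 0) →
        μ = fun n => Fhat r s x n := by
  have hp0 : p ≠ 0 := by linarith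
  have hp0' : (0:ℝ) ≤ 1 / p := by positivity
  constructor
  · intro n
    funext k
    exact Fhat_cseq r s hr n k
  intro x hx
  set f : ℕ → ℝ := fun k => |Fhat r s x k| ^ p with hf
  have hfnn : ∀ k, 0 ≤ f k := fun k => Real.rpow_nonneg (abs_nonneg _) p
  constructor
  · -- existence
    have hmain : Tendsto (fun m => (∑' i, f (i + (m + 1))) ^ (1 / p)) atTop (nhds 0) := by
      have h1 : Tendsto (fun q => ∑' i, f (i + q)) atTop (nhds 0) := tendsto_sum_nat_add f
      have h2 : Tendsto (fun m : ℕ => ∑' i, f (i + (m + 1))) atTop (nhds 0) :=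
        h1.comp (tendsto_add_atTop_nat 1)
      have := h2.rpow_const (p := 1 / p) (Or.inr hp0')
      rwa [Real.zero_rpow (one_div_ne_zero hp0)] at this
    refine hmain.congr fun m => ?_
    congr 1
    have heq : (fun k => |Fhat r s (fun i => x i - ∑ n ∈ Finset.range (m + 1),
        Fhat r s x n * cseq r s n i) k| ^ p) = fun k => if k ≤ m then 0 else f k := by
      funext k
      rw [Fhat_key r s hr]
      by_cases hk : k ≤ m
      · simp [hk, Real.zero_rpow hp0]
      · simp [hk, hf]
    have hsum_ite : Summable (fun k => if k ≤ m then 0 else f k) := by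
      refine Summable.of_nonneg_of_le (fun k => ?_) (fun k => ?_) hx
      · split <;> simp [hfnn]
      · split <;> simp [hfnn, le_refl]
    have e1 := Summable.sum_add_tsum_nat_add (m + 1) hsum_ite
    rw [Finset.sum_eq_zero (fun i hi => by
        simp [Nat.lt_succ_iff.mp (Finset.mem_range.mp hi)]), zero_add] at e1
    rw [heq, ← e1]
    exact tsum_congr fun i => by simp [Nat.not_le.mpr (by omega : m < i + (m + 1))]
  · -- uniqueness
    intro μ hμ
    funext j
    show μ j = Fhat r s x j
    have hev : ∀ᶠ m in atTop, |Fhat r s x j - μ j| ≤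
        (∑' k, |Fhat r s (fun i => x i - ∑ n ∈ Finset.range (m + 1),
          μ n * cseq r s n i) k| ^ p) ^ (1 / p) := by
      filter_upwards [eventually_ge_atTop j] with m hm
      have heq : (fun k => |Fhat r s (fun i => x i - ∑ n ∈ Finset.range (m + 1),
          μ n * cseq r s n i) k| ^ p)
          = fun k => |Fhat r s x k - (if k ≤ m then μ k else 0)| ^ p := by
        funext k; rw [Fhat_key r s hr]
      have hsum : Summable (fun k => |Fhat r s x k - (if k ≤ m then μ k else 0)| ^ p) := by
        refine (summable_nat_add_iff (m + 1)).mp ?_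
        have h2 : Summable (fun n => f (n + (m + 1))) := (summable_nat_add_iff (m + 1)).mpr hx
        refine h2.congr fun n => ?_
        simp [hf, Nat.not_le.mpr (by omega : m < n + (m + 1))]
      have hle : |Fhat r s x j - μ j| ^ p ≤
          ∑' k, |Fhat r s x k - (if k ≤ m then μ k else 0)| ^ p := by
        have := Summable.le_tsum hsum j (fun i _ => Real.rpow_nonneg (abs_nonneg _) p)
        simpa [hm] using this
      have h3 : (|Fhat r s x j - μ j| ^ p) ^ (1 / p) = |Fhat r s x j - μ j| := by
        rw [← Real.rpow_mul (abs_nonneg _), mul_one_div_cancel hp0, Real.rpow_one]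
      calc |Fhat r s x j - μ j| = (|Fhat r s x j - μ j| ^ p) ^ (1 / p) := h3.symm
        _ ≤ (∑' k, |Fhat r s x k - (if k ≤ m then μ k else 0)| ^ p) ^ (1 / p) :=
            Real.rpow_le_rpow (Real.rpow_nonneg (abs_nonneg _) p) hle hp0'
        _ = _ := by rw [heq]
    have hle0 : |Fhat r s x j - μ j| ≤ 0 := ge_of_tendsto hμ hev
    have := abs_nonneg (Fhat r s x j - μ j)
    have h0 : Fhat r s x j - μ j = 0 := abs_eq_zero.mp (le_antisymm hle0 this)
    linarith
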